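/- Let 0 < q < 1, w ≥ 1, m ∈ ℕ, and for i = 1,…,w let n_i ∈ ℕ with m ≤ n_i and x_i ∈ [0,1]. Then ∏_{i=1}^{w} ( [1−x_i]_q + [x_i]_q )^{−(n_i−m)} · Σ_{k₁=m}^{n₁} Σ_{k₂=m}^{n₂} ⋯ Σ_{k_w=m}^{n_w} ∏_{i=1}^{w} ( C(k_i,m)/C(n_i,m) ) · B_{k₁,…,k_w; n₁,…,n_w}(x₁,…,x_w; q) = Σ_{l₁=0}^{m} Σ_{l₂=0}^{m} ⋯ Σ_{l_w=0}^{m} q^{Σ_{i=1}^{w} C(l_i,2)} · ∏_{i=1}^{w} binom(x_i, l_i)_q · [l_i]_q! · S(m, l_i; q). -/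

import Mathlib

open Finset

/-- The `q`-number `[x]_q = (1 - q^x)/(1 - q)` (real exponent). -/
noncomputable def qnum (q x : ℝ) : ℝ := (1 - q ^ x) / (1 - q)

/-- The `q`-factorial `[n]_q! = [1]_q [2]_q ⋯ [n]_q`. -/
noncomputable def qfac (q : ℝ) (n : ℕ) : ℝ :=
  ∏ j ∈ Finset.range n, qnum q ((j : ℝ) + 1)

/-- The Gaussian binomial coefficient `binom(n,k)_q = [n]_q!/([k]_q!·[n−k]_q!)`. -/
noncomputable def qbinom (q : ℝ) (n k : ℕ) : ℝ :=
  qfac q n / (qfac q k * qfac q (n - k))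

/-- The Gaussian binomial coefficient with real upper argument,
`binom(x,k)_q = ([x]_q [x−1]_q ⋯ [x−k+1]_q)/[k]_q!`. -/
noncomputable def qbinomR (q x : ℝ) (k : ℕ) : ℝ :=
  (∏ j ∈ Finset.range k, qnum q (x - (j : ℝ))) / qfac q k

/-- The `q`-extension of the second kind Stirling numbers,
`S(n,k;q) = (q^{−C(k,2)}/[k]_q!) Σ_{i=0}^{k} (−1)^i q^{C(i,2)} binom(k,i)_q [k−i]_q^n`. -/
noncomputable def qStirling (q : ℝ) (n k : ℕ) : ℝ :=
  ((q ^ k.choose 2)⁻¹ / qfac q k) *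
    ∑ i ∈ Finset.range (k + 1),
      (-1 : ℝ) ^ i * q ^ i.choose 2 * qbinom q k i * qnum q ((k - i : ℕ) : ℝ) ^ n

/-- The modified `q`-Bernstein polynomial
`B_{k,n}(x;q) = C(n,k) [x]_q^k [1-x]_q^(n-k)`. -/
noncomputable def qBern (q : ℝ) (k n : ℕ) (x : ℝ) : ℝ :=
  (n.choose k : ℝ) * qnum q x ^ k * qnum q (1 - x) ^ (n - k)

section
variable {q : ℝ}

lemma qnum_add (hq0 : 0 < q) (a b : ℝ) : qnum q (a + b) = qnum q a + q ^ a * qnum q b := by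
  unfold qnum
  rw [Real.rpow_add hq0]
  ring

lemma qnum_zero : qnum q 0 = 0 := by
  unfold qnum; rw [Real.rpow_zero]; simp

lemma qnum_nat_pos (hq0 : 0 < q) (hq1 : q < 1) {k : ℕ} (hk : 1 ≤ k) : 0 < qnum q (k : ℝ) := by
  unfold qnum
  rw [Real.rpow_natCast]
  have h1 : q ^ k < 1 := pow_lt_one₀ hq0.le hq1 (by omega)
  have h2 : (0:ℝ) < 1 - q := by linarith
  exact div_pos (by linarith) h2

lemma qnum_succ_pos (hq0 : 0 < q) (hq1 : q < 1) (k : ℕ) : 0 < qnum q ((k : ℝ) + 1) := by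
  have := qnum_nat_pos hq0 hq1 (k := k + 1) (by omega)
  push_cast at this
  exact this

lemma qfac_pos (hq0 : 0 < q) (hq1 : q < 1) (n : ℕ) : 0 < qfac q n :=
  Finset.prod_pos fun j _ => qnum_succ_pos hq0 hq1 j

lemma qfac_ne_zero (hq0 : 0 < q) (hq1 : q < 1) (n : ℕ) : qfac q n ≠ 0 :=
  (qfac_pos hq0 hq1 n).ne'

lemma qfac_zero : qfac q 0 = 1 := by simp [qfac]

lemma qfac_succ (n : ℕ) : qfac q (n + 1) = qfac q n * qnum q ((n : ℝ) + 1) := by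
  simp [qfac, Finset.prod_range_succ]

/-- `[a+b]_q = [a]_q + q^a [b]_q` with natural arguments and nat powers. -/
lemma qnum_nat_add (hq0 : 0 < q) (a b : ℕ) :
    qnum q ((a + b : ℕ) : ℝ) = qnum q (a : ℝ) + q ^ a * qnum q (b : ℝ) := by
  have := qnum_add hq0 (a : ℝ) (b : ℝ)
  rw [Real.rpow_natCast] at this
  push_cast
  rw [this]

lemma qbinom_zero_right (hq0 : 0 < q) (hq1 : q < 1) (l : ℕ) : qbinom q l 0 = 1 := by
  simp [qbinom, qfac_zero]
  exact qfac_ne_zero hq0 hq1 l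

lemma qbinom_self (hq0 : 0 < q) (hq1 : q < 1) (l : ℕ) : qbinom q l l = 1 := by
  simp [qbinom, qfac_zero]
  exact qfac_ne_zero hq0 hq1 l

lemma qbinom_pascal (hq0 : 0 < q) (hq1 : q < 1) {i l : ℕ} (h : i < l) :
    qbinom q (l + 1) (i + 1) = qbinom q l i + q ^ (i + 1) * qbinom q l (i + 1) := by
  obtain ⟨d, rfl⟩ : ∃ d, l = i + d + 1 := ⟨l - i - 1, by omega⟩
  have h1 : i + d + 1 + 1 - (i + 1) = d + 1 := by omega
  have h2 : i + d + 1 - (i + 1) = d := by omega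
  have h3 : i + d + 1 - i = d + 1 := by omega
  have key : qnum q ((i + d + 1 + 1 : ℕ) : ℝ)
      = qnum q ((i + 1 : ℕ) : ℝ) + q ^ (i + 1) * qnum q ((d + 1 : ℕ) : ℝ) := by
    have := qnum_nat_add hq0 (i + 1) (d + 1)
    rw [← this]; norm_num; ring_nf
  unfold qbinom
  rw [h1, h2, h3]
  have e1 : qfac q (i + d + 1 + 1) = qfac q (i + d + 1) * qnum q ((i + d + 1 + 1 : ℕ) : ℝ) := by
    rw [qfac_succ]; push_cast; ring_nf
  have e2 : qfac q (i + 1) = qfac q i * qnum q ((i + 1 : ℕ) : ℝ) := by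
    rw [qfac_succ]; push_cast; ring_nf
  have e3 : qfac q (d + 1) = qfac q d * qnum q ((d + 1 : ℕ) : ℝ) := by
    rw [qfac_succ]; push_cast; ring_nf
  rw [e1, e2, e3, key]
  have hi := qfac_ne_zero hq0 hq1 i
  have hd := qfac_ne_zero hq0 hq1 d
  have hni := (qnum_succ_pos hq0 hq1 i).ne'
  have hnd := (qnum_succ_pos hq0 hq1 d).ne'
  push_cast at key ⊢
  field_simp

/-- `[i+1]·binom(l+1,i+1) = [l+1]·binom(l,i)` for `i ≤ l`. -/
lemma qnum_mul_qbinom (hq0 : 0 < q) (hq1 : q < 1) {i l : ℕ} (h : i ≤ l) :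
    qnum q ((i + 1 : ℕ) : ℝ) * qbinom q (l + 1) (i + 1)
      = qnum q ((l + 1 : ℕ) : ℝ) * qbinom q l i := by
  have h1 : l + 1 - (i + 1) = l - i := by omega
  unfold qbinom
  rw [h1]
  have e1 : qfac q (l + 1) = qfac q l * qnum q ((l + 1 : ℕ) : ℝ) := by
    rw [qfac_succ]; push_cast; ring_nf
  have e2 : qfac q (i + 1) = qfac q i * qnum q ((i + 1 : ℕ) : ℝ) := by
    rw [qfac_succ]; push_cast; ring_nf
  rw [e1, e2]
  have hi := qfac_ne_zero hq0 hq1 i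
  have hl := qfac_ne_zero hq0 hq1 (l - i)
  have hni := (qnum_succ_pos hq0 hq1 i).ne'
  push_cast
  field_simp

end

/-- The inner sum of the `q`-Stirling number (times `q^{C(l,2)}[l]!`). -/
noncomputable def qSum (q : ℝ) (m l : ℕ) : ℝ :=
  ∑ i ∈ Finset.range (l + 1),
    (-1 : ℝ) ^ i * q ^ i.choose 2 * qbinom q l i * qnum q ((l - i : ℕ) : ℝ) ^ m

section
variable {q : ℝ}

lemma choose_two_succ (i : ℕ) : (i + 1).choose 2 = i.choose 2 + i := by
  rw [Nat.choose_succ_succ]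
  simp [Nat.choose_one_right, Nat.add_comm]

/-- Gauss's alternating sum identity: `qSum q 0 l = 0` for `l ≥ 1`. -/
lemma qSum_zero_vanish (hq0 : 0 < q) (hq1 : q < 1) {l : ℕ} (hl : 1 ≤ l) :
    qSum q 0 l = 0 := by
  obtain ⟨t, rfl⟩ : ∃ t, l = t + 1 := ⟨l - 1, by omega⟩
  unfold qSum
  simp only [pow_zero, mul_one]
  set a : ℕ → ℝ := fun j => (-1 : ℝ) ^ j * q ^ (j.choose 2 + j) * qbinom q t j with ha
  have step : ∀ i ∈ Finset.range t,
      (-1 : ℝ) ^ (i + 1) * q ^ (i + 1).choose 2 * qbinom q (t + 1) (i + 1) = a (i + 1) - a i := by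
    intro i hi
    rw [Finset.mem_range] at hi
    rw [qbinom_pascal hq0 hq1 hi, ha]
    simp only
    rw [choose_two_succ]
    ring
  rw [Finset.sum_range_succ', Finset.sum_range_succ, Finset.sum_congr rfl step,
    Finset.sum_range_sub a]
  have h0 : a 0 = 1 := by simp [ha, qbinom_zero_right hq0 hq1]
  have ht : (-1 : ℝ) ^ (t + 1) * q ^ (t + 1).choose 2 * qbinom q (t + 1) (t + 1) = -a t := by
    rw [qbinom_self hq0 hq1, ha]
    simp only [qbinom_self hq0 hq1]
    rw [choose_two_succ]
    ring
  rw [ht, h0]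
  simp only [pow_zero, one_mul, Nat.choose_zero_succ, qbinom_zero_right hq0 hq1]
  ring

/-- Recurrence: `qSum q (m+1) (t+1) = [t+1]·qSum q m (t+1) + q^t·[t+1]·qSum q m t`. -/
lemma qSum_rec (hq0 : 0 < q) (hq1 : q < 1) (m t : ℕ) :
    qSum q (m + 1) (t + 1)
      = qnum q ((t + 1 : ℕ) : ℝ) * qSum q m (t + 1)
        + q ^ t * qnum q ((t + 1 : ℕ) : ℝ) * qSum q m t := by
  unfold qSum
  have split : ∀ i ∈ Finset.range (t + 2),
      (-1 : ℝ) ^ i * q ^ i.choose 2 * qbinom q (t + 1) i * qnum q ((t + 1 - i : ℕ) : ℝ) ^ (m + 1)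
      = qnum q ((t + 1 : ℕ) : ℝ) *
          ((-1 : ℝ) ^ i * q ^ i.choose 2 * qbinom q (t + 1) i * qnum q ((t + 1 - i : ℕ) : ℝ) ^ m)
        - (-1 : ℝ) ^ i * q ^ i.choose 2 * qbinom q (t + 1) i * q ^ (t + 1 - i)
            * qnum q ((i : ℕ) : ℝ) * qnum q ((t + 1 - i : ℕ) : ℝ) ^ m := by
    intro i hi
    rw [Finset.mem_range] at hi
    have hsub : qnum q ((t + 1 : ℕ) : ℝ)
        = qnum q ((t + 1 - i : ℕ) : ℝ) + q ^ (t + 1 - i) * qnum q ((i : ℕ) : ℝ) := by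
      have := qnum_nat_add hq0 (t + 1 - i) i
      rw [show t + 1 - i + i = t + 1 by omega] at this
      exact this
    rw [hsub]
    ring
  rw [Finset.sum_congr rfl split, Finset.sum_sub_distrib, ← Finset.mul_sum]
  have hB : ∑ i ∈ Finset.range (t + 2),
      (-1 : ℝ) ^ i * q ^ i.choose 2 * qbinom q (t + 1) i * q ^ (t + 1 - i)
        * qnum q ((i : ℕ) : ℝ) * qnum q ((t + 1 - i : ℕ) : ℝ) ^ m
      = -(q ^ t * qnum q ((t + 1 : ℕ) : ℝ) * ∑ i ∈ Finset.range (t + 1),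
          (-1 : ℝ) ^ i * q ^ i.choose 2 * qbinom q t i * qnum q ((t - i : ℕ) : ℝ) ^ m) := by
    rw [Finset.sum_range_succ']
    rw [Finset.mul_sum, ← Finset.sum_neg_distrib]
    have h0 : (-1 : ℝ) ^ 0 * q ^ (Nat.choose 0 2) * qbinom q (t + 1) 0 * q ^ (t + 1 - 0)
        * qnum q ((0 : ℕ) : ℝ) * qnum q ((t + 1 - 0 : ℕ) : ℝ) ^ m = 0 := by
      norm_num [qnum_zero]
    rw [h0, add_zero]
    refine Finset.sum_congr rfl fun i hi => ?_
    rw [Finset.mem_range] at hi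
    have hi' : i ≤ t := by omega
    have h1 := qnum_mul_qbinom hq0 hq1 (q := q) hi'
    have h2 : q ^ (i.choose 2 + i) * q ^ (t - i) = q ^ i.choose 2 * q ^ t := by
      rw [← pow_add, ← pow_add]
      congr 1
      omega
    rw [show t + 1 - (i + 1) = t - i by omega, choose_two_succ]
    linear_combination ((-1 : ℝ) ^ (i + 1) * qnum q ((t - i : ℕ) : ℝ) ^ m
          * q ^ (i.choose 2 + i) * q ^ (t - i)) * h1
      + ((-1 : ℝ) ^ (i + 1) * qnum q ((t - i : ℕ) : ℝ) ^ m
          * qnum q ((t + 1 : ℕ) : ℝ) * qbinom q t i) * h2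
  rw [hB]
  ring

end

section
variable {q : ℝ}

lemma qSum_vanish (hq0 : 0 < q) (hq1 : q < 1) :
    ∀ m l : ℕ, m < l → qSum q m l = 0 := by
  intro m
  induction m with
  | zero => exact fun l hl => qSum_zero_vanish hq0 hq1 hl
  | succ m ih =>
    intro l hl
    obtain ⟨t, rfl⟩ : ∃ t, l = t + 1 := ⟨l - 1, by omega⟩
    rw [qSum_rec hq0 hq1, ih (t + 1) (by omega), ih t (by omega)]
    ring

lemma qSum_zero_left (m : ℕ) : qSum q (m + 1) 0 = 0 := by
  unfold qSum
  simp [qnum_zero]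

lemma qSum_zero_zero (hq0 : 0 < q) (hq1 : q < 1) : qSum q 0 0 = 1 := by
  unfold qSum
  simp [qbinom_zero_right hq0 hq1]

lemma qbinomR_zero (x : ℝ) : qbinomR q x 0 = 1 := by
  simp [qbinomR, qfac_zero]

/-- `[x]·binom_R(x,l) = [l]·binom_R(x,l) + [l+1]·q^l·binom_R(x,l+1)`. -/
lemma qbinomR_succ_mul (hq0 : 0 < q) (hq1 : q < 1) (x : ℝ) (l : ℕ) :
    qnum q ((l + 1 : ℕ) : ℝ) * qbinomR q x (l + 1)
      = qbinomR q x l * qnum q (x - (l : ℝ)) := by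
  unfold qbinomR
  rw [Finset.prod_range_succ, qfac_succ]
  have h1 := qfac_ne_zero hq0 hq1 l
  have h2 := (qnum_succ_pos hq0 hq1 l).ne'
  push_cast
  field_simp

/-- Key single-variable identity:
`[x]^m = ∑_{l=0}^m binom_R(x,l) · qSum q m l`. -/
lemma qnum_pow_eq_sum (hq0 : 0 < q) (hq1 : q < 1) (x : ℝ) (m : ℕ) :
    qnum q x ^ m = ∑ l ∈ Finset.range (m + 1), qbinomR q x l * qSum q m l := by
  induction m with
  | zero =>
    simp [qbinomR_zero, qSum_zero_zero hq0 hq1]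
  | succ m ih =>
    have hx : ∀ l : ℕ, qnum q x = qnum q ((l : ℕ) : ℝ) + q ^ l * qnum q (x - (l : ℝ)) := by
      intro l
      have := qnum_add hq0 ((l : ℕ) : ℝ) (x - (l : ℝ))
      rw [Real.rpow_natCast] at this
      rw [← this]
      norm_num
    calc qnum q x ^ (m + 1) = (∑ l ∈ Finset.range (m + 1), qbinomR q x l * qSum q m l) * qnum q x := by
          rw [← ih]; ring
      _ = ∑ l ∈ Finset.range (m + 1),
            (qbinomR q x l * qnum q ((l : ℕ) : ℝ) * qSum q m l
              + q ^ l * (qnum q ((l + 1 : ℕ) : ℝ) * qbinomR q x (l + 1)) * qSum q m l) := by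
          rw [Finset.sum_mul]
          refine Finset.sum_congr rfl fun l _ => ?_
          rw [qbinomR_succ_mul hq0 hq1, hx l]
          ring
      _ = ∑ l ∈ Finset.range (m + 1), qbinomR q x l * qnum q ((l : ℕ) : ℝ) * qSum q m l
            + ∑ l ∈ Finset.range (m + 1),
                qbinomR q x (l + 1) * (q ^ l * qnum q ((l + 1 : ℕ) : ℝ) * qSum q m l) := by
          rw [← Finset.sum_add_distrib]
          refine Finset.sum_congr rfl fun l _ => ?_
          ring
      _ = ∑ l ∈ Finset.range (m + 2), qbinomR q x l * qSum q (m + 1) l := by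
          rw [Finset.sum_range_succ' (fun l => qbinomR q x l * qSum q (m + 1) l) (m + 1)]
          have e0 : qbinomR q x 0 * qSum q (m + 1) 0 = 0 := by
            rw [qSum_zero_left]; ring
          rw [e0, add_zero]
          have e1 : ∀ l ∈ Finset.range (m + 1),
              qbinomR q x (l + 1) * qSum q (m + 1) (l + 1)
              = qbinomR q x (l + 1) * qnum q ((l + 1 : ℕ) : ℝ) * qSum q m (l + 1)
                + qbinomR q x (l + 1) * (q ^ l * qnum q ((l + 1 : ℕ) : ℝ) * qSum q m l) := by
            intro l _
            rw [qSum_rec hq0 hq1]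
            ring
          rw [Finset.sum_congr rfl e1, Finset.sum_add_distrib]
          congr 1
          -- reindex: `∑_{l<m+1} f l (with f 0 = 0)` vs `∑_{l<m+1} f (l+1)` with top term vanishing
          rw [Finset.sum_range_succ'
            (fun l => qbinomR q x l * qnum q ((l : ℕ) : ℝ) * qSum q m l) m]
          have e2 : qbinomR q x 0 * qnum q ((0 : ℕ) : ℝ) * qSum q m 0 = 0 := by
            norm_num [qnum_zero]
          rw [e2, add_zero, Finset.sum_range_succ]
          have e3 : qbinomR q x (m + 1) * qnum q ((m + 1 : ℕ) : ℝ) * qSum q m (m + 1) = 0 := by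
            rw [qSum_vanish hq0 hq1 m (m + 1) (by omega)]
            ring
          rw [e3, add_zero]

end

section
variable {q : ℝ}

lemma bern_sum (hq0 : 0 < q) (hq1 : q < 1) {m n : ℕ} (h : m ≤ n) (x : ℝ) :
    ∑ k ∈ Finset.Icc m n, ((k.choose m : ℝ) / (n.choose m : ℝ)) * qBern q k n x
      = qnum q x ^ m * (qnum q (1 - x) + qnum q x) ^ (n - m) := by
  have hnm : (n.choose m : ℝ) ≠ 0 := by
    exact_mod_cast (Nat.choose_pos h).ne'
  have step1 : ∀ k ∈ Finset.Icc m n,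
      ((k.choose m : ℝ) / (n.choose m : ℝ)) * qBern q k n x
        = (((n - m).choose (k - m) : ℝ)) * (qnum q x ^ k * qnum q (1 - x) ^ (n - k)) := by
    intro k hk
    rw [Finset.mem_Icc] at hk
    have hc : n.choose k * k.choose m = n.choose m * (n - m).choose (k - m) := Nat.choose_mul hk.1
    have hc' : ((n.choose k : ℝ)) * (k.choose m : ℝ) = (n.choose m : ℝ) * ((n - m).choose (k - m) : ℝ) := by
      exact_mod_cast congrArg (Nat.cast (R := ℝ)) hc
    unfold qBern
    field_simp
    linear_combination (qnum q x ^ k * qnum q (1 - x) ^ (n - k)) * hc'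
  rw [Finset.sum_congr rfl step1]
  rw [Finset.sum_nbij' (i := fun k => k - m) (j := fun j => m + j)
    (t := Finset.range (n - m + 1))
    (g := fun j => (((n - m).choose j : ℝ)) * (qnum q x ^ (m + j) * qnum q (1 - x) ^ (n - (m + j))))
    (by intro a ha; rw [Finset.mem_Icc] at ha; rw [Finset.mem_range]; omega)
    (by intro a ha; rw [Finset.mem_range] at ha; rw [Finset.mem_Icc]; omega)
    (by intro a ha; rw [Finset.mem_Icc] at ha; omega)
    (by intro a ha; omega)
    (by intro a ha; rw [Finset.mem_Icc] at ha
        rw [show m + (a - m) = a by omega])]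
  rw [add_comm (qnum q (1 - x)) (qnum q x), add_pow]
  rw [Finset.mul_sum]
  refine Finset.sum_congr rfl fun j hj => ?_
  rw [Finset.mem_range] at hj
  rw [show n - (m + j) = (n - m) - j by omega, pow_add]
  ring

end

section
variable {q : ℝ}

lemma qStirling_eq (m c : ℕ) :
    qStirling q m c = ((q ^ c.choose 2)⁻¹ / qfac q c) * qSum q m c := rfl

lemma qnum_nonneg (hq0 : 0 < q) (hq1 : q < 1) {y : ℝ} (hy : 0 ≤ y) : 0 ≤ qnum q y := by
  have h1 : q ^ y ≤ 1 := Real.rpow_le_one hq0.le hq1.le hy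
  exact div_nonneg (by linarith) (by linarith)

lemma qnum_pos (hq0 : 0 < q) (hq1 : q < 1) {y : ℝ} (hy : 0 < y) : 0 < qnum q y := by
  have h1 : q ^ y < 1 := Real.rpow_lt_one hq0.le hq1 hy
  exact div_pos (by linarith) (by linarith)

lemma s_pos (hq0 : 0 < q) (hq1 : q < 1) {x : ℝ} (hx : x ∈ Set.Icc (0:ℝ) 1) :
    0 < qnum q (1 - x) + qnum q x := by
  obtain ⟨h0, h1⟩ := hx
  by_cases hx0 : 0 < x
  · have := qnum_pos hq0 hq1 hx0
    have := qnum_nonneg hq0 hq1 (show (0:ℝ) ≤ 1 - x by linarith)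
    linarith
  · have hx0' : x = 0 := le_antisymm (not_lt.1 hx0) h0
    subst hx0'
    have := qnum_pos hq0 hq1 (show (0:ℝ) < 1 - 0 by norm_num)
    rw [qnum_zero]
    linarith

end

/-- The degree evaluation expression for the modified `q`-Bernstein polynomials
of several variables equals the `q`-Stirling expansion of `(∏ᵢ [xᵢ]_q)^m`. -/
theorem modified_qBernstein_degree_evaluation_eq_qStirling_expansion
    (q : ℝ) (hq0 : 0 < q) (hq1 : q < 1)
    (w : ℕ) (hw : 1 ≤ w) (m : ℕ) (n : Fin w → ℕ) (hn : ∀ i, m ≤ n i)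
    (x : Fin w → ℝ) (hx : ∀ i, x i ∈ Set.Icc (0 : ℝ) 1) :
    (∏ i, (qnum q (1 - x i) + qnum q (x i)) ^ (-((n i : ℤ) - (m : ℤ)))) *
        ∑ k ∈ Finset.Icc (fun _ => m : Fin w → ℕ) n,
          ∏ i, (((k i).choose m : ℝ) / ((n i).choose m : ℝ)) *
            qBern q (k i) (n i) (x i) =
      ∑ l ∈ Finset.Icc (0 : Fin w → ℕ) (fun _ => m),
        q ^ (∑ i, (l i).choose 2) *
          ∏ i, qbinomR q (x i) (l i) * qfac q (l i) * qStirling q m (l i) := by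
  have key : ∀ i : Fin w,
      ((qnum q (1 - x i) + qnum q (x i)) ^ (-((n i : ℤ) - (m : ℤ)))) *
        ∑ k ∈ Finset.Icc m (n i),
          ((k.choose m : ℝ) / ((n i).choose m : ℝ)) * qBern q k (n i) (x i)
      = qnum q (x i) ^ m := by
    intro i
    rw [bern_sum hq0 hq1 (hn i) (x i)]
    have he : -((n i : ℤ) - (m : ℤ)) = -(((n i - m : ℕ) : ℤ)) := by
      have := hn i; push_cast; omega
    rw [he, zpow_neg, zpow_natCast]
    have hsne : (qnum q (1 - x i) + qnum q (x i)) ^ (n i - m) ≠ 0 :=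
      pow_ne_zero _ (s_pos hq0 hq1 (hx i)).ne'
    field_simp
  calc (∏ i, (qnum q (1 - x i) + qnum q (x i)) ^ (-((n i : ℤ) - (m : ℤ)))) *
        ∑ k ∈ Finset.Icc (fun _ => m : Fin w → ℕ) n,
          ∏ i, (((k i).choose m : ℝ) / ((n i).choose m : ℝ)) *
            qBern q (k i) (n i) (x i)
      = ∏ i, (((qnum q (1 - x i) + qnum q (x i)) ^ (-((n i : ℤ) - (m : ℤ)))) *
          ∑ k ∈ Finset.Icc m (n i),
            ((k.choose m : ℝ) / ((n i).choose m : ℝ)) * qBern q k (n i) (x i)) := by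
        rw [Pi.Icc_eq,
          ← Finset.prod_univ_sum (fun i => Finset.Icc m (n i))
            (fun i c => ((c.choose m : ℝ) / ((n i).choose m : ℝ)) * qBern q c (n i) (x i)),
          ← Finset.prod_mul_distrib]
    _ = ∏ i, qnum q (x i) ^ m := Finset.prod_congr rfl fun i _ => key i
    _ = ∏ i, ∑ c ∈ Finset.Icc 0 m, qbinomR q (x i) c * qSum q m c := by
        refine Finset.prod_congr rfl fun i _ => ?_
        rw [show Finset.Icc 0 m = Finset.range (m + 1) by ext c; simp]
        exact qnum_pow_eq_sum hq0 hq1 (x i) m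
    _ = ∑ l ∈ Finset.Icc (0 : Fin w → ℕ) (fun _ => m),
        q ^ (∑ i, (l i).choose 2) *
          ∏ i, qbinomR q (x i) (l i) * qfac q (l i) * qStirling q m (l i) := by
        rw [Pi.Icc_eq, Finset.prod_univ_sum]
        refine Finset.sum_congr rfl fun l _ => ?_
        rw [← Finset.prod_pow_eq_pow_sum, ← Finset.prod_mul_distrib]
        refine Finset.prod_congr rfl fun i _ => ?_
        rw [qStirling_eq]
        have h1 := qfac_ne_zero hq0 hq1 (l i)
        have h2 : q ^ (l i).choose 2 ≠ 0 := pow_ne_zero _ hq0.ne'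
        field_simp
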